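/- For every real number p with 1 ≤ p < ∞, in the Banach space ℓᵖ of real p-summable sequences there exists a set S which is Haar meager (and hence meager) but not Haar null. -/

import Mathlib

open MeasureTheory Set

/-- A set in a topological abelian group is *Haar meager* if there is a Borel set `B ⊇ A`,
a nonempty compact metric space `K` and a continuous `f : K → G` such that `f ⁻¹' (B + x)`
is meager in `K` for every `x ∈ G`. -/
def IsHaarMeager {G : Type*} [TopologicalSpace G] [AddCommGroup G] (A : Set G) : Prop :=
  ∃ B : Set G, A ⊆ B ∧ MeasurableSet[borel G] B ∧
    ∃ (K : Type) (_ : MetricSpace K) (_ : CompactSpace K) (_ : Nonempty K) (f : K → G),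
      Continuous f ∧ ∀ x : G, IsMeagre (f ⁻¹' ((fun b => b + x) '' B))

/-- A set in a topological abelian group is *Haar null* if there is a Borel probability
measure `μ` and a Borel set `B ⊇ A` with `μ (x + B) = 0` for every `x ∈ G`. -/
def IsHaarNull {G : Type*} [TopologicalSpace G] [AddCommGroup G] (A : Set G) : Prop :=
  ∃ μ : @Measure G (borel G), @IsProbabilityMeasure G (borel G) μ ∧
    ∃ B : Set G, A ⊆ B ∧ MeasurableSet[borel G] B ∧
      ∀ x : G, μ ((fun b => x + b) '' B) = 0

noncomputable section LpCex
open ENNReal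
namespace LpCex

def Pp (n : ℕ) : ℝ := (4 : ℝ)⁻¹ ^ n
def rr (n : ℕ) : ℝ := (2 : ℝ)⁻¹ ^ n / 16
def ee (n : ℕ) : ℝ := rr n * Pp n
def ww (n : ℕ) : ℝ := (2 : ℝ)⁻¹ ^ n
def Gap (n : ℕ) : Set ℝ := ⋃ j : ℤ, Ioo ((j : ℝ) * Pp n) ((j : ℝ) * Pp n + ee n)

lemma Pp_pos (n : ℕ) : 0 < Pp n := by unfold Pp; positivity
lemma rr_pos (n : ℕ) : 0 < rr n := by unfold rr; positivity
lemma ee_pos (n : ℕ) : 0 < ee n := mul_pos (rr_pos n) (Pp_pos n)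
lemma ww_pos (n : ℕ) : 0 < ww n := by unfold ww; positivity
lemma rr_le_one (n : ℕ) : rr n ≤ 1 := by
  have : (2:ℝ)⁻¹ ^ n ≤ 1 := pow_le_one₀ (by norm_num) (by norm_num)
  simp only [rr]; linarith
lemma ee_le_Pp (n : ℕ) : ee n ≤ Pp n := by
  have := Pp_pos n
  calc ee n = rr n * Pp n := rfl
    _ ≤ 1 * Pp n := by nlinarith [rr_le_one n]
    _ = Pp n := one_mul _
lemma ww_eq (n : ℕ) : ww n = 2 ^ n * Pp n := by
  have h4 : (4 : ℝ)⁻¹ ^ n = (2:ℝ)⁻¹ ^ n * (2:ℝ)⁻¹ ^ n := by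
    rw [← mul_pow]; norm_num
  have h2 : (2:ℝ) ^ n * (2:ℝ)⁻¹ ^ n = 1 := by
    rw [← mul_pow]; norm_num
  simp only [ww, Pp, h4]
  rw [← mul_assoc, h2, one_mul]

lemma isOpen_gap (n : ℕ) : IsOpen (Gap n) := isOpen_iUnion fun _ => isOpen_Ioo

lemma exists_shift_mem_gap (n : ℕ) (t : ℝ) :
    ∃ c : ℝ, 0 < c ∧ c ≤ 2 * Pp n ∧ t + c ∈ Gap n := by
  have hP := Pp_pos n
  set j : ℤ := ⌊t / Pp n⌋ + 1 with hj
  have h1 : t < (j : ℝ) * Pp n := by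
    have := Int.lt_floor_add_one (t / Pp n)
    have : t / Pp n < (j : ℝ) := by push_cast [hj]; linarith
    calc t = (t / Pp n) * Pp n := by field_simp
      _ < (j : ℝ) * Pp n := by nlinarith
  have h2 : (j : ℝ) * Pp n ≤ t + Pp n := by
    have := Int.floor_le (t / Pp n)
    have hcast : (j : ℝ) ≤ t / Pp n + 1 := by push_cast [hj]; linarith
    have := mul_le_mul_of_nonneg_right hcast (le_of_lt hP)
    calc (j : ℝ) * Pp n ≤ (t / Pp n + 1) * Pp n := this
      _ = t + Pp n := by field_simp
  refine ⟨(j : ℝ) * Pp n + ee n / 2 - t, by nlinarith [ee_pos n], by nlinarith [ee_le_Pp n], ?_⟩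
  refine mem_iUnion.2 ⟨j, ?_⟩
  exact ⟨by nlinarith [ee_pos n], by nlinarith [ee_pos n]⟩

lemma isMeagre_of_closed_empty_interior {X : Type*} [TopologicalSpace X] {s : Set X}
    (hc : IsClosed s) (hi : interior s = ∅) : IsMeagre s := by
  rw [isMeagre_iff_countable_union_isNowhereDense]
  exact ⟨{s}, by simpa using hc.isNowhereDense_iff.2 hi, countable_singleton _, by simp⟩

/-- Key measure estimate. -/
lemma bad_measure (n : ℕ) (c : ℝ) :
    volume.restrict (Ioc (0:ℝ) 1) ((fun t : ℝ => c - t * ww n) ⁻¹' Gap n)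
      ≤ ENNReal.ofReal (4 * rr n) := by
  have hw := ww_pos n; have hP := Pp_pos n; have hr := rr_pos n; have he := ee_pos n
  have h2n : (1:ℝ) ≤ 2 ^ n := one_le_pow₀ (by norm_num)
  set lb : ℝ := (c - ee n - ww n) / Pp n with hlb
  set Jf : Finset ℤ := Finset.Icc (⌊lb⌋ + 1) ⌊c / Pp n⌋ with hJf
  have hpre : (fun t : ℝ => c - t * ww n) ⁻¹' Gap n =
      ⋃ j : ℤ, Ioo ((c - j * Pp n - ee n) / ww n) ((c - j * Pp n) / ww n) := by
    ext t
    simp only [Gap, mem_preimage, mem_iUnion, mem_Ioo]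
    constructor
    · rintro ⟨j, h1, h2⟩
      exact ⟨j, by rw [div_lt_iff₀ hw]; linarith, by rw [lt_div_iff₀ hw]; linarith⟩
    · rintro ⟨j, h1, h2⟩
      rw [div_lt_iff₀ hw] at h1
      rw [lt_div_iff₀ hw] at h2
      exact ⟨j, by linarith, by linarith⟩
  have hmeas : MeasurableSet ((fun t : ℝ => c - t * ww n) ⁻¹' Gap n) := by
    rw [hpre]; exact (isOpen_iUnion fun _ => isOpen_Ioo).measurableSet
  rw [Measure.restrict_apply hmeas]
  have hincl : (fun t : ℝ => c - t * ww n) ⁻¹' Gap n ∩ Ioc (0:ℝ) 1 ⊆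
      ⋃ j ∈ Jf, Ioo ((c - j * Pp n - ee n) / ww n) ((c - j * Pp n) / ww n) := by
    rw [hpre]
    rintro t ⟨ht, ht0, ht1⟩
    rw [mem_iUnion] at ht
    obtain ⟨j, h1, h2⟩ := ht
    refine mem_iUnion₂.2 ⟨j, ?_, h1, h2⟩
    rw [Finset.mem_Icc]
    constructor
    · rw [Int.add_one_le_iff, Int.floor_lt, hlb, div_lt_iff₀ hP]
      rw [div_lt_iff₀ hw] at h1
      nlinarith
    · rw [Int.le_floor, le_div_iff₀ hP]
      rw [lt_div_iff₀ hw] at h2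
      nlinarith
  calc volume ((fun t : ℝ => c - t * ww n) ⁻¹' Gap n ∩ Ioc (0:ℝ) 1)
      ≤ volume (⋃ j ∈ Jf, Ioo ((c - j * Pp n - ee n) / ww n) ((c - j * Pp n) / ww n)) :=
        measure_mono hincl
    _ ≤ ∑ j ∈ Jf, volume (Ioo ((c - j * Pp n - ee n) / ww n) ((c - j * Pp n) / ww n)) :=
        measure_biUnion_finset_le _ _
    _ = ∑ j ∈ Jf, ENNReal.ofReal (ee n / ww n) := by
        refine Finset.sum_congr rfl fun j _ => ?_
        rw [Real.volume_Ioo]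
        congr 1
        field_simp
        ring
    _ = (Jf.card : ℝ≥0∞) * ENNReal.ofReal (ee n / ww n) := by
        rw [Finset.sum_const, nsmul_eq_mul]
    _ ≤ ENNReal.ofReal ((2 ^ n + 2) * (ee n / ww n)) := by
        rw [← ENNReal.ofReal_natCast, ← ENNReal.ofReal_mul (by positivity)]
        apply ENNReal.ofReal_le_ofReal
        apply mul_le_mul_of_nonneg_right _ (by positivity)
        have hc1 : (⌊c / Pp n⌋ : ℝ) ≤ c / Pp n := Int.floor_le _
        have hc2 : lb - 1 < (⌊lb⌋ : ℝ) := Int.sub_one_lt_floor _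
        have hlb' : lb = c / Pp n - rr n - 2 ^ n := by
          rw [hlb, ww_eq]
          unfold ee
          field_simp
        have hZ : (⌊c / Pp n⌋ + 1 - (⌊lb⌋ + 1) : ℤ) ≤ (2:ℤ) ^ n + 2 := by
          have : ((⌊c / Pp n⌋ + 1 - (⌊lb⌋ + 1) : ℤ) : ℝ) ≤ ((2:ℤ) ^ n + 2 : ℤ) := by
            push_cast
            nlinarith [rr_le_one n]
          exact_mod_cast this
        have : Jf.card ≤ 2 ^ n + 2 := by
          rw [hJf, Int.card_Icc]
          calc (⌊c / Pp n⌋ + 1 - (⌊lb⌋ + 1) : ℤ).toNat ≤ ((2:ℤ) ^ n + 2).toNat :=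
                Int.toNat_le_toNat hZ
            _ = 2 ^ n + 2 := by
                have h : ((2:ℤ) ^ n + 2) = ((2 ^ n + 2 : ℕ) : ℤ) := by push_cast; ring
                rw [h, Int.toNat_natCast]
        exact_mod_cast this
    _ ≤ ENNReal.ofReal (4 * rr n) := by
        apply ENNReal.ofReal_le_ofReal
        have hew : ee n / ww n = rr n / 2 ^ n := by
          rw [ww_eq]; unfold ee; field_simp
        rw [hew]
        have h2p : (0:ℝ) < 2 ^ n := by positivity
        have key : (2 ^ n + 2) * (rr n / 2 ^ n) = ((2 ^ n + 2) / 2 ^ n) * rr n := by ring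
        rw [key]
        apply mul_le_mul_of_nonneg_right _ hr.le
        rw [div_le_iff₀ h2p]
        nlinarith

variable (p : ℝ)

/-- The exceptional set: sequences all of whose coordinates avoid the gaps. -/
def Svec : Set (lp (fun _ : ℕ => ℝ) (ENNReal.ofReal p)) :=
  {x | ∀ n : ℕ, (x : ∀ _ : ℕ, ℝ) n ∉ Gap n}

variable {p} (hp : 1 ≤ p) [Fact (1 ≤ ENNReal.ofReal p)]
include hp

lemma pi_toReal : (ENNReal.ofReal p).toReal = p :=
  ENNReal.toReal_ofReal (by linarith)

lemma pi_ne_zero : (ENNReal.ofReal p) ≠ 0 := by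
  simp only [ne_eq, ENNReal.ofReal_eq_zero, not_le]; linarith

lemma continuous_eval (n : ℕ) :
    Continuous fun x : lp (fun _ : ℕ => ℝ) (ENNReal.ofReal p) => (x : ∀ _ : ℕ, ℝ) n := by
  refine (LipschitzWith.of_dist_le_mul (K := 1) fun x y => ?_).continuous
  have h : dist ((x : ∀ _ : ℕ, ℝ) n) ((y : ∀ _ : ℕ, ℝ) n)
      = ‖((x - y : lp _ _) : ∀ _ : ℕ, ℝ) n‖ := by
    rw [lp.coeFn_sub, Pi.sub_apply, Real.dist_eq, Real.norm_eq_abs]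
  rw [h, dist_eq_norm, NNReal.coe_one, one_mul]
  exact lp.norm_apply_le_norm (pi_ne_zero hp) _ n

lemma isClosed_Svec : IsClosed (Svec p) := by
  have h : Svec p = ⋂ n : ℕ, (fun x : lp (fun _ : ℕ => ℝ) (ENNReal.ofReal p) =>
      (x : ∀ _ : ℕ, ℝ) n) ⁻¹' (Gap n)ᶜ := by
    ext x; simp [Svec]
  rw [h]
  exact isClosed_iInter fun n =>
    ((isOpen_gap n).isClosed_compl).preimage (continuous_eval hp n)

lemma interior_Svec : interior (Svec p) = ∅ := by
  rw [eq_empty_iff_forall_notMem]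
  intro x hx
  rw [mem_interior_iff_mem_nhds, Metric.mem_nhds_iff] at hx
  obtain ⟨δ, hδ, hball⟩ := hx
  obtain ⟨n, hn⟩ : ∃ n : ℕ, (4:ℝ)⁻¹ ^ n < δ / 2 :=
    exists_pow_lt_of_lt_one (by linarith) (by norm_num)
  have hPδ : 2 * Pp n < δ := by unfold Pp; linarith
  obtain ⟨c, hc0, hc2, hcg⟩ := exists_shift_mem_gap n ((x : ∀ _ : ℕ, ℝ) n)
  set y : lp (fun _ : ℕ => ℝ) (ENNReal.ofReal p) :=
    x + c • lp.single (ENNReal.ofReal p) n ((fun _ : ℕ => (1:ℝ)) n) with hy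
  have hyn : (y : ∀ _ : ℕ, ℝ) n = (x : ∀ _ : ℕ, ℝ) n + c := by
    rw [hy, lp.coeFn_add, Pi.add_apply, lp.coeFn_smul, Pi.smul_apply,
      lp.single_apply_self, smul_eq_mul, mul_one]
  have hdist : dist y x < δ := by
    have hns := lp.norm_single (E := fun _ : ℕ => ℝ) (p := ENNReal.ofReal p)
      (ENNReal.ofReal_pos.2 (by linarith) : 0 < ENNReal.ofReal p) n ((fun _ : ℕ => (1:ℝ)) n)
    rw [dist_eq_norm, hy, add_sub_cancel_left, norm_smul, hns]
    simp only [norm_one, mul_one, Real.norm_eq_abs, abs_of_pos hc0]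
    linarith
  have hyS : y ∈ Svec p := hball hdist
  exact hyS n (by rw [hyn]; exact hcg)

lemma memℓp_ww : Memℓp ww (ENNReal.ofReal p) := by
  apply memℓp_gen
  rw [pi_toReal hp]
  have hsum : Summable fun n : ℕ => (2:ℝ)⁻¹ ^ n :=
    summable_geometric_of_lt_one (by norm_num) (by norm_num)
  refine Summable.of_nonneg_of_le (fun n => ?_) (fun n => ?_) hsum
  · exact Real.rpow_nonneg (norm_nonneg _) _
  · have h1 : ‖ww n‖ = (2:ℝ)⁻¹ ^ n := by
      rw [Real.norm_eq_abs, abs_of_pos (ww_pos n)]; rfl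
    rw [h1]
    calc ((2:ℝ)⁻¹ ^ n) ^ p ≤ ((2:ℝ)⁻¹ ^ n) ^ (1:ℝ) :=
          Real.rpow_le_rpow_of_exponent_ge (by positivity)
            (pow_le_one₀ (by norm_num) (by norm_num)) hp
      _ = (2:ℝ)⁻¹ ^ n := Real.rpow_one _

/-- The direction vector `w` with coordinates `2⁻ⁿ`. -/
def wlp : lp (fun _ : ℕ => ℝ) (ENNReal.ofReal p) := ⟨ww, memℓp_ww hp⟩

lemma wlp_coe : ((wlp hp : lp (fun _ : ℕ => ℝ) (ENNReal.ofReal p)) : ∀ _ : ℕ, ℝ) = ww := rfl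


set_option maxHeartbeats 1000000 in
lemma isHaarMeager_Svec : IsHaarMeager (Svec p) := by
  letI : MeasurableSpace (lp (fun _ : ℕ => ℝ) (ENNReal.ofReal p)) := borel _
  haveI : BorelSpace (lp (fun _ : ℕ => ℝ) (ENNReal.ofReal p)) := ⟨rfl⟩
  refine ⟨Svec p, subset_rfl, (isClosed_Svec hp).measurableSet,
    ↥(Icc (0:ℝ) 1), inferInstance, inferInstance, ⟨⟨0, by norm_num⟩⟩,
    fun t => (t : ℝ) • wlp hp, continuous_subtype_val.smul continuous_const, ?_⟩
  intro x
  have himg : (fun b => b + x) '' (Svec p) = (fun y => y - x) ⁻¹' (Svec p) := by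
    ext y
    constructor
    · rintro ⟨b, hb, rfl⟩
      simpa [add_sub_cancel_right] using hb
    · intro h
      exact ⟨y - x, h, sub_add_cancel y x⟩
  rw [himg]
  apply isMeagre_of_closed_empty_interior
  · exact (((isClosed_Svec hp).preimage (continuous_sub_right x)).preimage
      (continuous_subtype_val.smul continuous_const))
  · rw [eq_empty_iff_forall_notMem]
    intro t₀ ht₀
    rw [mem_interior_iff_mem_nhds, Metric.mem_nhds_iff] at ht₀
    obtain ⟨δ, hδ, hball⟩ := ht₀
    set δ₁ := min δ 1 with hδ₁
    have hδ₁pos : 0 < δ₁ := lt_min hδ one_pos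
    have hδ₁δ : δ₁ ≤ δ := min_le_left _ _
    have hδ₁1 : δ₁ ≤ 1 := min_le_right _ _
    have ht₀m := t₀.2
    rw [mem_Icc] at ht₀m
    obtain ⟨ht₀0, ht₀1⟩ := ht₀m
    set u := if (t₀ : ℝ) ≤ 1/2 then (t₀ : ℝ) else (t₀ : ℝ) - δ₁/2 with hu
    have hsub : ∀ s : ℝ, u < s → s < u + δ₁/2 → s ∈ Icc (0:ℝ) 1 ∧ |s - (t₀:ℝ)| < δ := by
      intro s h1 h2
      rw [hu] at h1 h2
      split_ifs at h1 h2 with hhalf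
      · exact ⟨⟨by linarith, by linarith⟩, abs_lt.2 ⟨by linarith, by linarith⟩⟩
      · push_neg at hhalf
        exact ⟨⟨by linarith, by linarith⟩, abs_lt.2 ⟨by linarith, by linarith⟩⟩
    obtain ⟨n, hn⟩ : ∃ n : ℕ, (2:ℝ)⁻¹ ^ n < δ₁/2 :=
      exists_pow_lt_of_lt_one (by linarith) (by norm_num)
    have hw := ww_pos n; have hP := Pp_pos n; have he := ee_pos n
    have hst : Pp n / ww n = (2:ℝ)⁻¹ ^ n := by
      rw [ww_eq, eq_comm, _root_.eq_div_iff (by positivity), ← mul_assoc, ← mul_pow]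
      norm_num
    set st := Pp n / ww n with hstdef
    have hst_pos : 0 < st := by rw [hstdef]; positivity
    set θ := ((x : ∀ _ : ℕ, ℝ) n + ee n / 2) / ww n with hθ
    set j := ⌊(u - θ) / st⌋ + 1 with hj
    set t := θ + (j : ℝ) * st with ht
    have hjlt : (u - θ)/st < (j:ℝ) := by
      push_cast [hj]
      linarith [Int.lt_floor_add_one ((u - θ)/st)]
    have hjle : (j:ℝ) ≤ (u - θ)/st + 1 := by
      push_cast [hj]
      linarith [Int.floor_le ((u - θ)/st)]
    have hquot : u - θ = ((u - θ)/st) * st := by field_simp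
    have h1 : u < t := by
      rw [ht]
      nlinarith [mul_lt_mul_of_pos_right hjlt hst_pos]
    have h2 : t ≤ u + st := by
      rw [ht]
      nlinarith [mul_le_mul_of_nonneg_right hjle hst_pos.le]
    have h3 : t < u + δ₁/2 := lt_of_le_of_lt h2 (by rw [hst]; linarith)
    obtain ⟨htI, htd⟩ := hsub t h1 h3
    have htb : (⟨t, htI⟩ : ↥(Icc (0:ℝ) 1)) ∈ Metric.ball t₀ δ := by
      rw [Metric.mem_ball, Subtype.dist_eq, Real.dist_eq]
      exact htd
    have hS : t • wlp hp - x ∈ Svec p := hball htb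
    apply hS n
    have hθw : θ * ww n = (x : ∀ _ : ℕ, ℝ) n + ee n / 2 := by
      rw [hθ, div_mul_cancel₀ _ (ne_of_gt hw)]
    have hstw : st * ww n = Pp n := by
      rw [hstdef, div_mul_cancel₀ _ (ne_of_gt hw)]
    have hcoord : ((t • wlp hp - x : lp (fun _ : ℕ => ℝ) (ENNReal.ofReal p)) : ∀ _ : ℕ, ℝ) n
        = (j : ℝ) * Pp n + ee n / 2 := by
      rw [lp.coeFn_sub, Pi.sub_apply, lp.coeFn_smul, Pi.smul_apply, wlp_coe hp, smul_eq_mul]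
      have hexp : t * ww n = ((x : ∀ _ : ℕ, ℝ) n + ee n / 2) + (j:ℝ) * Pp n := by
        rw [ht, add_mul, hθw, mul_assoc, hstw]
      rw [hexp]
      ring
    rw [hcoord]
    refine mem_iUnion.2 ⟨j, mem_Ioo.2 ⟨?_, ?_⟩⟩ <;> nlinarith

set_option maxHeartbeats 1000000 in
set_option synthInstance.maxHeartbeats 200000 in
lemma not_isHaarNull_Svec : ¬ IsHaarNull (Svec p) := by
  letI : MeasurableSpace (lp (fun _ : ℕ => ℝ) (ENNReal.ofReal p)) := borel _
  haveI : BorelSpace (lp (fun _ : ℕ => ℝ) (ENNReal.ofReal p)) := ⟨rfl⟩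
  rintro ⟨μ, hμprob, B, hSB, hB, h0⟩
  haveI := hμprob
  haveI : SFinite μ := inferInstance
  set w := wlp hp with hwdef
  set ν : Measure ℝ := volume.restrict (Ioc (0:ℝ) 1) with hν
  haveI : IsProbabilityMeasure ν := ⟨by
    rw [hν, Measure.restrict_apply_univ, Real.volume_Ioc]
    norm_num⟩
  have hgc : Continuous fun q : ℝ × lp (fun _ : ℕ => ℝ) (ENNReal.ofReal p) => q.2 - q.1 • w :=
    continuous_snd.sub (continuous_fst.smul continuous_const)
  set E2 := (fun q : ℝ × lp (fun _ : ℕ => ℝ) (ENNReal.ofReal p) => q.2 - q.1 • w) ⁻¹' B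
    with hE2def
  have hE2 : MeasurableSet E2 := hgc.measurable hB
  have hzero : (ν.prod μ) E2 = 0 := by
    rw [Measure.prod_apply hE2]
    have hs : ∀ t : ℝ, μ (Prod.mk t ⁻¹' E2) = 0 := by
      intro t
      have him : Prod.mk t ⁻¹' E2 = (fun b => t • w + b) '' B := by
        ext y
        simp only [hE2def, mem_preimage, mem_image]
        constructor
        · intro h
          exact ⟨y - t • w, h, by abel⟩
        · rintro ⟨b, hb, rfl⟩
          simpa using hb
      rw [him]
      exact h0 (t • w)
    simp only [hs]
    simp
  have hfun : (fun n : ℕ => 4 * rr n) = fun n : ℕ => (1/4) * (2:ℝ)⁻¹ ^ n := by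
    funext n
    unfold rr
    ring
  have hsummable : Summable (fun n : ℕ => 4 * rr n) := by
    rw [hfun]
    exact (summable_geometric_of_lt_one (by norm_num) (by norm_num)).mul_left _
  have hlow : ENNReal.ofReal (1/2) ≤ (ν.prod μ) E2 := by
    rw [Measure.prod_apply_symm hE2]
    have key : ∀ y : lp (fun _ : ℕ => ℝ) (ENNReal.ofReal p),
        ENNReal.ofReal (1/2) ≤ ν ((fun t => (t, y)) ⁻¹' E2) := by
      intro y
      set Bad : ℕ → Set ℝ := fun n => (fun t : ℝ => (y : ∀ _ : ℕ, ℝ) n - t * ww n) ⁻¹' Gap n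
        with hBad
      have hBsum : ν (⋃ n, Bad n) ≤ ENNReal.ofReal (1/2) := by
        calc ν (⋃ n, Bad n) ≤ ∑' n, ν (Bad n) := measure_iUnion_le _
          _ ≤ ∑' n, ENNReal.ofReal (4 * rr n) :=
              ENNReal.tsum_le_tsum (fun n => bad_measure n _)
          _ = ENNReal.ofReal (∑' n, 4 * rr n) :=
              (ENNReal.ofReal_tsum_of_nonneg (fun n => by nlinarith [rr_pos n]) hsummable).symm
          _ = ENNReal.ofReal (1/2) := by
              congr 1
              rw [hfun, tsum_mul_left, tsum_geometric_of_lt_one (by norm_num) (by norm_num)]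
              norm_num
      have hsubset : Ioc (0:ℝ) 1 \ (⋃ n, Bad n) ⊆ (fun t => (t, y)) ⁻¹' E2 := by
        intro t htmem
        obtain ⟨htI, htB⟩ := htmem
        have hSmem : y - t • w ∈ Svec p := by
          intro n hgap
          refine htB (mem_iUnion.2 ⟨n, ?_⟩)
          show (y : ∀ _ : ℕ, ℝ) n - t * ww n ∈ Gap n
          have hc : ((y - t • w : lp (fun _ : ℕ => ℝ) (ENNReal.ofReal p)) : ∀ _ : ℕ, ℝ) n
              = (y : ∀ _ : ℕ, ℝ) n - t * ww n := by
            rw [lp.coeFn_sub, Pi.sub_apply, lp.coeFn_smul, Pi.smul_apply, hwdef,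
              wlp_coe hp, smul_eq_mul]
          rwa [hc] at hgap
        exact hSB hSmem
      have hν1 : ν (Ioc (0:ℝ) 1) = 1 := by
        rw [hν, Measure.restrict_apply_self, Real.volume_Ioc]
        norm_num
      have hle : (1:ℝ≥0∞) ≤ ENNReal.ofReal (1/2) + ν (Ioc (0:ℝ) 1 \ ⋃ n, Bad n) := by
        calc (1:ℝ≥0∞) = ν (Ioc (0:ℝ) 1) := hν1.symm
          _ ≤ ν (Ioc (0:ℝ) 1 ∩ ⋃ n, Bad n) + ν (Ioc (0:ℝ) 1 \ ⋃ n, Bad n) :=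
              measure_le_inter_add_diff _ _ _
          _ ≤ ENNReal.ofReal (1/2) + ν (Ioc (0:ℝ) 1 \ ⋃ n, Bad n) := by
              gcongr
              exact le_trans (measure_mono inter_subset_right) hBsum
      have h12 : (1:ℝ≥0∞) - ENNReal.ofReal (1/2) = ENNReal.ofReal (1/2) := by
        rw [← ENNReal.ofReal_one, ← ENNReal.ofReal_sub _ (by norm_num)]
        norm_num
      have hgood : ENNReal.ofReal (1/2) ≤ ν (Ioc (0:ℝ) 1 \ ⋃ n, Bad n) := by
        rw [← h12]
        exact tsub_le_iff_left.2 hle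
      exact le_trans hgood (measure_mono hsubset)
    calc ENNReal.ofReal (1/2) = ∫⁻ _, ENNReal.ofReal (1/2) ∂μ := by
          rw [lintegral_const, measure_univ, mul_one]
      _ ≤ ∫⁻ y, ν ((fun t => (t, y)) ⁻¹' E2) ∂μ := lintegral_mono key
  rw [hzero] at hlow
  simp only [nonpos_iff_eq_zero, ENNReal.ofReal_eq_zero] at hlow
  norm_num at hlow

end LpCex
end LpCex

/-- For every real `p` with `1 ≤ p < ∞`, in the Banach space `ℓᵖ` of real `p`-summable
sequences there exists a set which is Haar meager (hence meager) but not Haar null. -/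
theorem exists_haarMeager_not_haarNull_lp (p : ℝ) (hp : 1 ≤ p) :
    letI : Fact (1 ≤ ENNReal.ofReal p) := ⟨ENNReal.one_le_ofReal.mpr hp⟩
    ∃ S : Set (lp (fun _ : ℕ => ℝ) (ENNReal.ofReal p)),
      IsHaarMeager S ∧ IsMeagre S ∧ ¬ IsHaarNull S := by
  haveI : Fact (1 ≤ ENNReal.ofReal p) := ⟨ENNReal.one_le_ofReal.mpr hp⟩
  exact ⟨LpCex.Svec p, LpCex.isHaarMeager_Svec hp,
    LpCex.isMeagre_of_closed_empty_interior (LpCex.isClosed_Svec hp) (LpCex.interior_Svec hp),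
    LpCex.not_isHaarNull_Svec hp⟩
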